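/- Let 1 < p ≤ 2 and let u, v : Ω → ℝ^N be measurable vector fields on a finite measure space with |u|, |v| ∈ L^p. Then ∫ |u − v|^p ≤ C (∫ (|u|^{p−2}u − |v|^{p−2}v)·(u − v))^{p/2} · (∫ (1 + |u|² + |v|²)^{p/2})^{1 − p/2}, where C depends only on p. -/

import Mathlib

open MeasureTheory Real

section scalar
variable {p : ℝ}

private lemma bern (hp : 1 < p) (hp2 : p ≤ 2) {t : ℝ} (ht : 0 ≤ t) :
    t ^ (p - 1) ≤ (p - 1) * t + (2 - p) := by
  have h := Real.geom_mean_le_arith_mean2_weighted (w₁ := p - 1) (w₂ := 2 - p)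
    (p₁ := t) (p₂ := 1) (by linarith) (by linarith) ht zero_le_one (by ring)
  simpa using h

private lemma rshift1 (hp : 1 < p) {b : ℝ} (hb : 0 ≤ b) : b ^ (p - 2) * b = b ^ (p - 1) := by
  rcases hb.eq_or_lt with h | h
  · subst h
    simp
    rw [Real.zero_rpow (by linarith : p - 1 ≠ 0)]
  · rw [show p - 1 = p - 2 + 1 by ring, Real.rpow_add h, Real.rpow_one]

private lemma rshift2 (hp : 1 < p) {b : ℝ} (hb : 0 ≤ b) : b ^ (p - 1) * b = b ^ p := by
  rcases hb.eq_or_lt with h | h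
  · subst h
    rw [Real.zero_rpow (by linarith : p - 1 ≠ 0), Real.zero_rpow (by linarith : p ≠ 0)]
    ring
  · have h2 := (Real.rpow_add h (p - 1) 1).symm
    rw [Real.rpow_one] at h2
    rw [h2, show p - 1 + 1 = p from by ring]

private lemma rsq (hp : 1 < p) {b : ℝ} (hb : 0 ≤ b) : b ^ (p - 2) * b ^ 2 = b ^ p := by
  have : b ^ 2 = b * b := sq b
  rw [this, ← mul_assoc, rshift1 hp hb, rshift2 hp hb]

private lemma K_le (hp2 : p ≤ 2) {a b : ℝ} (ha : 0 < a) (hb : 0 ≤ b) :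
    (1 + a ^ 2 + b ^ 2) ^ ((p - 2) / 2) ≤ a ^ (p - 2) := by
  have h1 : (1 + a ^ 2 + b ^ 2) ^ ((p - 2) / 2) ≤ (a ^ 2) ^ ((p - 2) / 2) :=
    Real.rpow_le_rpow_of_nonpos (by positivity) (by nlinarith [sq_nonneg b]) (by linarith)
  have h2 : ((a ^ 2 : ℝ)) ^ ((p - 2) / 2) = a ^ (p - 2) := by
    rw [← Real.rpow_natCast a 2, ← Real.rpow_mul ha.le,
      show ((2 : ℕ) : ℝ) * ((p - 2) / 2) = p - 2 by push_cast; ring]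
  linarith [h1, h2.le, h2.ge]

private lemma sqK_le (hp : 1 < p) (hp2 : p ≤ 2) {a b : ℝ} (ha : 0 ≤ a) (hb : 0 ≤ b) :
    a ^ 2 * (1 + a ^ 2 + b ^ 2) ^ ((p - 2) / 2) ≤ a ^ p := by
  rcases ha.eq_or_lt with h | h
  · subst h
    rw [Real.zero_rpow (by linarith : p ≠ 0)]
    norm_num
  · calc a ^ 2 * (1 + a ^ 2 + b ^ 2) ^ ((p - 2) / 2) ≤ a ^ 2 * a ^ (p - 2) :=
        mul_le_mul_of_nonneg_left (K_le hp2 h hb) (by positivity)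
    _ = a ^ p := by rw [mul_comm, rsq hp ha]

section
variable {p : ℝ}

private lemma end1 (hp : 1 < p) (hp2 : p ≤ 2) {a b : ℝ} (ha : 0 ≤ a) (hb : 0 ≤ b)
    (hba : b ≤ a) :
    (p - 1) / 2 * (a - b) ^ 2 * (1 + a ^ 2 + b ^ 2) ^ ((p - 2) / 2) ≤
      a ^ p + b ^ p - (a ^ (p - 2) + b ^ (p - 2)) * (a * b) := by
  rcases ha.eq_or_lt with h | h
  · have hb0 : b = 0 := le_antisymm (h ▸ hba) hb
    subst hb0
    rw [← h, Real.zero_rpow (by linarith : p ≠ 0)]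
    norm_num
  -- a > 0
  have ha' := h
  have hK := K_le hp2 ha' hb
  have ea1 := rshift1 hp ha
  have ea2 := rshift2 hp ha
  have eb1 := rshift1 hp hb
  have eb2 := rshift2 hp hb
  -- hmono : (p-1) * (a^(p-2) * (a-b)) ≤ a^(p-1) - b^(p-1)
  have hmono : (p - 1) * (a ^ (p - 2) * (a - b)) ≤ a ^ (p - 1) - b ^ (p - 1) := by
    have key := bern hp hp2 (t := b / a) (by positivity)
    have e0 : (b / a) ^ (p - 1) = b ^ (p - 1) / a ^ (p - 1) := Real.div_rpow hb ha'.le (p - 1)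
    have pos : (0 : ℝ) < a ^ (p - 1) := Real.rpow_pos_of_pos ha' _
    rw [e0, div_le_iff₀ pos] at key
    rw [← ea1] at key
    have e2 : ((p - 1) * (b / a) + (2 - p)) * (a ^ (p - 2) * a) =
        (p - 1) * (b * a ^ (p - 2)) + (2 - p) * (a ^ (p - 2) * a) := by
      field_simp
    rw [e2] at key
    nlinarith [key, ea1]
  have hab : 0 ≤ a - b := by linarith
  calc (p - 1) / 2 * (a - b) ^ 2 * (1 + a ^ 2 + b ^ 2) ^ ((p - 2) / 2)
      ≤ (p - 1) / 2 * (a - b) ^ 2 * (a ^ (p - 2)) := by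
        exact mul_le_mul_of_nonneg_left hK
          (mul_nonneg (by linarith) (sq_nonneg _))
    _ ≤ (p - 1) * (a ^ (p - 2) * (a - b)) * (a - b) := by
        have h0 : 0 ≤ (p - 1) / 2 * (a - b) ^ 2 * a ^ (p - 2) :=
          mul_nonneg (mul_nonneg (by linarith) (sq_nonneg _)) (Real.rpow_nonneg ha _)
        nlinarith [h0]
    _ ≤ (a ^ (p - 1) - b ^ (p - 1)) * (a - b) := mul_le_mul_of_nonneg_right hmono hab
    _ = a ^ p + b ^ p - (a ^ (p - 2) + b ^ (p - 2)) * (a * b) := by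
        rw [← ea2, ← eb2, ← ea1, ← eb1]; ring

private lemma end2 (hp : 1 < p) (hp2 : p ≤ 2) {a b : ℝ} (ha : 0 ≤ a) (hb : 0 ≤ b) :
    (p - 1) / 2 * (a + b) ^ 2 * (1 + a ^ 2 + b ^ 2) ^ ((p - 2) / 2) ≤
      a ^ p + b ^ p + (a ^ (p - 2) + b ^ (p - 2)) * (a * b) := by
  have hK0 : (0 : ℝ) ≤ (1 + a ^ 2 + b ^ 2) ^ ((p - 2) / 2) := Real.rpow_nonneg (by positivity) _
  have h1 := sqK_le hp hp2 ha hb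
  have h2 := sqK_le hp hp2 hb ha
  rw [show 1 + b ^ 2 + a ^ 2 = 1 + a ^ 2 + b ^ 2 by ring] at h2
  have key : (a + b) ^ 2 * (1 + a ^ 2 + b ^ 2) ^ ((p - 2) / 2) ≤ 2 * (a ^ p + b ^ p) := by
    calc (a + b) ^ 2 * (1 + a ^ 2 + b ^ 2) ^ ((p - 2) / 2)
        ≤ (2 * (a ^ 2 + b ^ 2)) * (1 + a ^ 2 + b ^ 2) ^ ((p - 2) / 2) :=
          mul_le_mul_of_nonneg_right (by nlinarith [sq_nonneg (a - b)]) hK0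
      _ = 2 * (a ^ 2 * (1 + a ^ 2 + b ^ 2) ^ ((p - 2) / 2)) +
          2 * (b ^ 2 * (1 + a ^ 2 + b ^ 2) ^ ((p - 2) / 2)) := by ring
      _ ≤ 2 * (a ^ p + b ^ p) := by linarith
  have h3 : (p - 1) / 2 * ((a + b) ^ 2 * (1 + a ^ 2 + b ^ 2) ^ ((p - 2) / 2)) ≤
      (p - 1) / 2 * (2 * (a ^ p + b ^ p)) := mul_le_mul_of_nonneg_left key (by linarith)
  have h4 : 0 ≤ a ^ p + b ^ p := by positivity
  have h5 : 0 ≤ (a ^ (p - 2) + b ^ (p - 2)) * (a * b) := by positivity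
  have h6 : 0 ≤ (2 - p) * (a ^ p + b ^ p) := mul_nonneg (by linarith) h4
  nlinarith [h3, h5, h6]

lemma scalar_key (hp : 1 < p) (hp2 : p ≤ 2) {a b s : ℝ} (ha : 0 ≤ a) (hb : 0 ≤ b)
    (hs : |s| ≤ a * b) :
    (p - 1) / 2 * (a ^ 2 + b ^ 2 - 2 * s) * (1 + a ^ 2 + b ^ 2) ^ ((p - 2) / 2) ≤
      a ^ p + b ^ p - (a ^ (p - 2) + b ^ (p - 2)) * s := by
  have E1 : (p - 1) / 2 * (a - b) ^ 2 * (1 + a ^ 2 + b ^ 2) ^ ((p - 2) / 2) ≤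
      a ^ p + b ^ p - (a ^ (p - 2) + b ^ (p - 2)) * (a * b) := by
    rcases le_total b a with h | h
    · exact end1 hp hp2 ha hb h
    · have h2 := end1 hp hp2 hb ha h
      rw [show 1 + b ^ 2 + a ^ 2 = 1 + a ^ 2 + b ^ 2 by ring] at h2
      rw [show (b - a) ^ 2 = (a - b) ^ 2 by ring] at h2
      linarith [h2]
  have E2 := end2 hp hp2 ha hb
  have hsl := (abs_le.1 hs).1
  have hsu := (abs_le.1 hs).2
  rcases (mul_nonneg ha hb).eq_or_lt with he | he
  · -- a*b = 0, hence s = 0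
    have hs0 : s = 0 := by
      have := abs_nonneg s
      have : |s| = 0 := le_antisymm (he ▸ hs) this
      exact abs_eq_zero.1 this
    subst hs0
    have h2 : (a - b) ^ 2 = a ^ 2 + b ^ 2 - 2 * (0 : ℝ) := by linear_combination 2 * he
    rw [← he] at E1
    rw [h2] at E1
    exact E1
  · have g1 : 0 ≤ (a * b - s) *
        (a ^ p + b ^ p + (a ^ (p - 2) + b ^ (p - 2)) * (a * b) -
          (p - 1) / 2 * (a + b) ^ 2 * (1 + a ^ 2 + b ^ 2) ^ ((p - 2) / 2)) :=
      mul_nonneg (by linarith) (by linarith)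
    have g2 : 0 ≤ (a * b + s) *
        (a ^ p + b ^ p - (a ^ (p - 2) + b ^ (p - 2)) * (a * b) -
          (p - 1) / 2 * (a - b) ^ 2 * (1 + a ^ 2 + b ^ 2) ^ ((p - 2) / 2)) :=
      mul_nonneg (by linarith) (by linarith)
    nlinarith [g1, g2, he]
end

section
variable {p : ℝ} {E : Type*} [NormedAddCommGroup E] [InnerProductSpace ℝ E]

lemma vec_key (hp : 1 < p) (hp2 : p ≤ 2) (x y : E) :
    (p - 1) / 2 * ‖x - y‖ ^ 2 * (1 + ‖x‖ ^ 2 + ‖y‖ ^ 2) ^ ((p - 2) / 2) ≤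
      (inner ℝ ((‖x‖ ^ (p - 2)) • x - (‖y‖ ^ (p - 2)) • y) (x - y) : ℝ) := by
  have hinner : (inner ℝ ((‖x‖ ^ (p - 2)) • x - (‖y‖ ^ (p - 2)) • y) (x - y) : ℝ) =
      ‖x‖ ^ (p - 2) * ‖x‖ ^ 2 + ‖y‖ ^ (p - 2) * ‖y‖ ^ 2 -
        (‖x‖ ^ (p - 2) + ‖y‖ ^ (p - 2)) * (inner ℝ x y : ℝ) := by
    simp only [inner_sub_left, inner_sub_right, real_inner_smul_left,
      real_inner_self_eq_norm_sq]
    rw [real_inner_comm y x]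
    ring
  rw [hinner, rsq hp (norm_nonneg x), rsq hp (norm_nonneg y)]
  have hnorm : ‖x - y‖ ^ 2 = ‖x‖ ^ 2 - 2 * (inner ℝ x y : ℝ) + ‖y‖ ^ 2 := norm_sub_sq_real x y
  rw [hnorm]
  have hkey := scalar_key hp hp2 (norm_nonneg x) (norm_nonneg y)
    (abs_real_inner_le_norm x y)
  linarith [hkey]
end

section aux
variable {p : ℝ}

private lemma cross_le (hp : 1 < p) {a b : ℝ} (ha : 0 ≤ a) (hb : 0 ≤ b) :
    a ^ (p - 1) * b ≤ a ^ p + b ^ p := by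
  rcases le_total b a with h | h
  · have h1 : a ^ (p - 1) * b ≤ a ^ (p - 1) * a :=
      mul_le_mul_of_nonneg_left h (Real.rpow_nonneg ha _)
    rw [rshift2 hp ha] at h1
    have := Real.rpow_nonneg hb p
    linarith
  · have h1 : a ^ (p - 1) ≤ b ^ (p - 1) := Real.rpow_le_rpow ha h (by linarith)
    have h2 : a ^ (p - 1) * b ≤ b ^ (p - 1) * b := mul_le_mul_of_nonneg_right h1 hb
    rw [rshift2 hp hb] at h2
    have := Real.rpow_nonneg ha p
    linarith

private lemma big_bound (hp : 0 < p) {a b c : ℝ} (ha : 0 ≤ a) (hb : 0 ≤ b) (hc : 0 ≤ c)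
    (hcab : c ≤ 1 + a + b) : c ^ p ≤ 3 ^ p * (1 + a ^ p + b ^ p) := by
  set m : ℝ := max 1 (max a b) with hm
  have hm1 : (1 : ℝ) ≤ m := le_max_left _ _
  have hma : a ≤ m := le_trans (le_max_left a b) (le_max_right _ _)
  have hmb : b ≤ m := le_trans (le_max_right a b) (le_max_right _ _)
  have h1 : c ^ p ≤ (3 * m) ^ p :=
    Real.rpow_le_rpow hc (by linarith) hp.le
  have h2 : (3 * m) ^ p = 3 ^ p * m ^ p := Real.mul_rpow (by norm_num) (by linarith)
  have h3 : m ^ p ≤ 1 + a ^ p + b ^ p := by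
    have hcases : m = 1 ∨ m = a ∨ m = b := by
      rcases max_cases 1 (max a b) with ⟨h, _⟩ | ⟨h, _⟩
      · exact Or.inl h
      · rcases max_cases a b with ⟨h2, _⟩ | ⟨h2, _⟩
        · exact Or.inr (Or.inl (h.trans h2))
        · exact Or.inr (Or.inr (h.trans h2))
    rcases hcases with h | h | h <;> rw [h]
    · rw [Real.one_rpow]
      have := Real.rpow_nonneg ha p
      have := Real.rpow_nonneg hb p
      linarith
    · have := Real.rpow_nonneg hb p
      linarith
    · have := Real.rpow_nonneg ha p
      linarith
  have h4 : (0:ℝ) ≤ 3 ^ p := Real.rpow_nonneg (by norm_num) _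
  calc c ^ p ≤ 3 ^ p * m ^ p := by rw [← h2]; exact h1
    _ ≤ 3 ^ p * (1 + a ^ p + b ^ p) := mul_le_mul_of_nonneg_left h3 h4

private lemma Mp_bound (hp : 0 < p) {a b : ℝ} (ha : 0 ≤ a) (hb : 0 ≤ b) :
    (1 + a ^ 2 + b ^ 2) ^ (p / 2) ≤ 3 ^ p * (1 + a ^ p + b ^ p) := by
  have h1 : (1 + a ^ 2 + b ^ 2 : ℝ) ≤ (1 + a + b) ^ 2 := by nlinarith [mul_nonneg ha hb]
  have h2 : (1 + a ^ 2 + b ^ 2) ^ (p / 2) ≤ ((1 + a + b) ^ 2) ^ (p / 2) :=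
    Real.rpow_le_rpow (by positivity) h1 (by positivity)
  have h3 : (((1 + a + b) ^ 2 : ℝ)) ^ (p / 2) = (1 + a + b) ^ p := by
    rw [← Real.rpow_natCast (1 + a + b) 2, ← Real.rpow_mul (by linarith),
      show ((2 : ℕ) : ℝ) * (p / 2) = p by push_cast; ring]
  rw [h3] at h2
  exact h2.trans (big_bound hp (by linarith) (by linarith) (by linarith) le_rfl)

private lemma D_bound {E : Type*} [NormedAddCommGroup E] [InnerProductSpace ℝ E]
    (hp : 1 < p) (x y : E) :
    |(inner ℝ ((‖x‖ ^ (p - 2)) • x - (‖y‖ ^ (p - 2)) • y) (x - y) : ℝ)| ≤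
      3 * (‖x‖ ^ p + ‖y‖ ^ p) := by
  have h1 := abs_real_inner_le_norm ((‖x‖ ^ (p - 2)) • x - (‖y‖ ^ (p - 2)) • y) (x - y)
  have h2 : ‖(‖x‖ ^ (p - 2)) • x - (‖y‖ ^ (p - 2)) • y‖ ≤ ‖x‖ ^ (p - 1) + ‖y‖ ^ (p - 1) := by
    refine (norm_sub_le _ _).trans ?_
    rw [norm_smul, norm_smul, Real.norm_eq_abs, Real.norm_eq_abs,
      abs_of_nonneg (Real.rpow_nonneg (norm_nonneg x) _),
      abs_of_nonneg (Real.rpow_nonneg (norm_nonneg y) _),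
      rshift1 hp (norm_nonneg x), rshift1 hp (norm_nonneg y)]
  have h3 : ‖x - y‖ ≤ ‖x‖ + ‖y‖ := norm_sub_le x y
  have h4 : ‖(‖x‖ ^ (p - 2)) • x - (‖y‖ ^ (p - 2)) • y‖ * ‖x - y‖ ≤
      (‖x‖ ^ (p - 1) + ‖y‖ ^ (p - 1)) * (‖x‖ + ‖y‖) :=
    mul_le_mul h2 h3 (norm_nonneg _)
      (by positivity)
  have c1 := cross_le hp (norm_nonneg x) (norm_nonneg y)
  have c2 := cross_le hp (norm_nonneg y) (norm_nonneg x)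
  have e1 := rshift2 hp (norm_nonneg x)
  have e2 := rshift2 hp (norm_nonneg y)
  nlinarith [h1, h4, c1, c2, e1, e2]
end aux

theorem stmt_9 (p : ℝ) (hp : 1 < p) (hp2 : p ≤ 2) :
    ∃ C : ℝ, 0 < C ∧
      ∀ (N : ℕ) (Ω : Type) (_ : MeasurableSpace Ω) (μ : Measure Ω),
        IsFiniteMeasure μ →
        ∀ (u v : Ω → EuclideanSpace ℝ (Fin N)),
          Measurable u → Measurable v →
          Integrable (fun x => ‖u x‖ ^ p) μ →
          Integrable (fun x => ‖v x‖ ^ p) μ →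
          ∫ x, ‖u x - v x‖ ^ p ∂μ ≤
            C * (∫ x, (inner ℝ ((‖u x‖ ^ (p - 2)) • u x - (‖v x‖ ^ (p - 2)) • v x)
                    (u x - v x) : ℝ) ∂μ) ^ (p / 2) *
              (∫ x, (1 + ‖u x‖ ^ 2 + ‖v x‖ ^ 2) ^ (p / 2) ∂μ) ^ (1 - p / 2) := by
  have hp0 : (0 : ℝ) < p := by linarith
  have hp1 : (0 : ℝ) < p - 1 := by linarith
  refine ⟨(2 / (p - 1)) ^ (p / 2), Real.rpow_pos_of_pos (by positivity) _, ?_⟩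
  intro N Ω mΩ μ hfin u v hu hv hup hvp
  -- abbreviations (as plain definitions to keep syntactic match)
  have hc : (0 : ℝ) ≤ 2 / (p - 1) := by positivity
  -- measurability
  have hmD : Measurable (fun x => (inner ℝ ((‖u x‖ ^ (p - 2)) • u x - (‖v x‖ ^ (p - 2)) • v x)
      (u x - v x) : ℝ)) :=
    Measurable.inner (((hu.norm.pow measurable_const).smul hu).sub
      ((hv.norm.pow measurable_const).smul hv)) (hu.sub hv)
  have hmM : Measurable (fun x => (1 + ‖u x‖ ^ 2 + ‖v x‖ ^ 2 : ℝ)) :=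
    (measurable_const.add (hu.norm.pow_const 2)).add (hv.norm.pow_const 2)
  have hmMp : Measurable (fun x => (1 + ‖u x‖ ^ 2 + ‖v x‖ ^ 2) ^ (p / 2)) :=
    hmM.pow measurable_const
  have hmW : Measurable (fun x => ‖u x - v x‖ ^ 2 *
      (1 + ‖u x‖ ^ 2 + ‖v x‖ ^ 2) ^ ((p - 2) / 2)) :=
    ((hu.sub hv).norm.pow_const 2).mul (hmM.pow measurable_const)
  -- integrability
  have hbase : Integrable (fun x => 3 ^ p * (1 + ‖u x‖ ^ p + ‖v x‖ ^ p)) μ :=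
    (((integrable_const 1).add hup).add hvp).const_mul _
  have hMp_int : Integrable (fun x => (1 + ‖u x‖ ^ 2 + ‖v x‖ ^ 2) ^ (p / 2)) μ := by
    refine Integrable.mono' hbase hmMp.aestronglyMeasurable (ae_of_all _ fun x => ?_)
    rw [Real.norm_of_nonneg (Real.rpow_nonneg (by positivity) _)]
    exact Mp_bound hp0 (norm_nonneg _) (norm_nonneg _)
  have huvp_int : Integrable (fun x => ‖u x - v x‖ ^ p) μ := by
    refine Integrable.mono' hbase ((hu.sub hv).norm.pow measurable_const).aestronglyMeasurable
      (ae_of_all _ fun x => ?_)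
    rw [Real.norm_of_nonneg (Real.rpow_nonneg (norm_nonneg _) _)]
    refine big_bound hp0 (norm_nonneg _) (norm_nonneg _) (norm_nonneg _) ?_
    have := norm_sub_le (u x) (v x)
    linarith
  have hD_int : Integrable (fun x => (inner ℝ ((‖u x‖ ^ (p - 2)) • u x -
      (‖v x‖ ^ (p - 2)) • v x) (u x - v x) : ℝ)) μ := by
    refine Integrable.mono' ((hup.add hvp).const_mul 3) hmD.aestronglyMeasurable
      (ae_of_all _ fun x => ?_)
    rw [Real.norm_eq_abs]
    exact D_bound hp (u x) (v x)
  -- pointwise facts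
  have hW_nonneg : ∀ x, (0:ℝ) ≤ ‖u x - v x‖ ^ 2 *
      (1 + ‖u x‖ ^ 2 + ‖v x‖ ^ 2) ^ ((p - 2) / 2) :=
    fun x => mul_nonneg (pow_nonneg (norm_nonneg _) 2) (Real.rpow_nonneg (by positivity) _)
  have hWle : ∀ x, ‖u x - v x‖ ^ 2 * (1 + ‖u x‖ ^ 2 + ‖v x‖ ^ 2) ^ ((p - 2) / 2) ≤
      2 / (p - 1) * (inner ℝ ((‖u x‖ ^ (p - 2)) • u x - (‖v x‖ ^ (p - 2)) • v x)
        (u x - v x) : ℝ) := by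
    intro x
    have h := vec_key hp hp2 (u x) (v x)
    have h3 := mul_le_mul_of_nonneg_left h hc
    calc ‖u x - v x‖ ^ 2 * (1 + ‖u x‖ ^ 2 + ‖v x‖ ^ 2) ^ ((p - 2) / 2)
        = 2 / (p - 1) * ((p - 1) / 2 * ‖u x - v x‖ ^ 2 *
            (1 + ‖u x‖ ^ 2 + ‖v x‖ ^ 2) ^ ((p - 2) / 2)) := by
          field_simp
      _ ≤ _ := h3
  have hD_nonneg : ∀ x, (0:ℝ) ≤ (inner ℝ ((‖u x‖ ^ (p - 2)) • u x -
      (‖v x‖ ^ (p - 2)) • v x) (u x - v x) : ℝ) := by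
    intro x
    refine le_trans ?_ (vec_key hp hp2 (u x) (v x))
    have := hW_nonneg x
    nlinarith
  have hW_int : Integrable (fun x => ‖u x - v x‖ ^ 2 *
      (1 + ‖u x‖ ^ 2 + ‖v x‖ ^ 2) ^ ((p - 2) / 2)) μ := by
    refine Integrable.mono' (hD_int.const_mul (2 / (p - 1))) hmW.aestronglyMeasurable
      (ae_of_all _ fun x => ?_)
    rw [Real.norm_of_nonneg (hW_nonneg x)]
    exact hWle x
  have hID0 : 0 ≤ ∫ x, (inner ℝ ((‖u x‖ ^ (p - 2)) • u x - (‖v x‖ ^ (p - 2)) • v x)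
      (u x - v x) : ℝ) ∂μ := integral_nonneg hD_nonneg
  -- case split on p = 2
  rcases eq_or_lt_of_le hp2 with hp2' | hp2'
  · -- p = 2
    subst hp2'
    have hD2 : ∀ x, (inner ℝ ((‖u x‖ ^ ((2:ℝ) - 2)) • u x - (‖v x‖ ^ ((2:ℝ) - 2)) • v x)
        (u x - v x) : ℝ) = ‖u x - v x‖ ^ (2:ℝ) := by
      intro x
      rw [show (2:ℝ) - 2 = 0 by norm_num, Real.rpow_zero, Real.rpow_zero, one_smul, one_smul,
        real_inner_self_eq_norm_sq, show (2:ℝ) = ((2:ℕ):ℝ) by norm_num, Real.rpow_natCast]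
    have hIeq : (∫ x, (inner ℝ ((‖u x‖ ^ ((2:ℝ) - 2)) • u x - (‖v x‖ ^ ((2:ℝ) - 2)) • v x)
        (u x - v x) : ℝ) ∂μ) = ∫ x, ‖u x - v x‖ ^ (2:ℝ) ∂μ :=
      integral_congr_ae (ae_of_all _ hD2)
    rw [hIeq]
    rw [show (2:ℝ)/2 = 1 by norm_num, show 1 - (1:ℝ) = 0 by norm_num, Real.rpow_zero,
      Real.rpow_one, mul_one, show (2:ℝ)/(2-1) = 2 by norm_num, Real.rpow_one]
    have hI0 : 0 ≤ ∫ x, ‖u x - v x‖ ^ (2:ℝ) ∂μ :=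
      integral_nonneg fun x => Real.rpow_nonneg (norm_nonneg _) _
    linarith
  · -- p < 2
    have h2p : (0:ℝ) < 2 - p := by linarith
    have hpq : Real.HolderConjugate (2 / p) (2 / (2 - p)) := by
      rw [Real.holderConjugate_iff]; constructor
      · rw [lt_div_iff₀ hp0]; linarith
      · rw [inv_div, inv_div]; ring
    -- Memℒp facts
    have hmem1 : MemLp (fun x => (‖u x - v x‖ ^ 2 *
        (1 + ‖u x‖ ^ 2 + ‖v x‖ ^ 2) ^ ((p - 2) / 2)) ^ (p / 2))
        (ENNReal.ofReal (2 / p)) μ := by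
      have h := (memLp_norm_rpow_iff (q := ENNReal.ofReal (p / 2)) (p := 1)
        hW_int.aestronglyMeasurable (by simp [ENNReal.ofReal_eq_zero]; linarith)
        (by simp)).2 (memLp_one_iff_integrable.2 hW_int)
      rw [ENNReal.toReal_ofReal (by positivity), one_div,
        ← ENNReal.ofReal_inv_of_pos (by positivity), inv_div] at h
      have e3 : (fun x => ‖‖u x - v x‖ ^ 2 *
          (1 + ‖u x‖ ^ 2 + ‖v x‖ ^ 2) ^ ((p - 2) / 2)‖ ^ (p / 2)) =
          fun x => (‖u x - v x‖ ^ 2 *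
            (1 + ‖u x‖ ^ 2 + ‖v x‖ ^ 2) ^ ((p - 2) / 2)) ^ (p / 2) :=
        funext fun x => by rw [Real.norm_of_nonneg (hW_nonneg x)]
      rwa [e3] at h
    have hmem2 : MemLp (fun x => ((1 + ‖u x‖ ^ 2 + ‖v x‖ ^ 2) ^ (p / 2)) ^ ((2 - p) / 2))
        (ENNReal.ofReal (2 / (2 - p))) μ := by
      have h := (memLp_norm_rpow_iff (q := ENNReal.ofReal ((2 - p) / 2)) (p := 1)
        hMp_int.aestronglyMeasurable (by simp [ENNReal.ofReal_eq_zero]; linarith)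
        (by simp)).2 (memLp_one_iff_integrable.2 hMp_int)
      rw [ENNReal.toReal_ofReal (by positivity), one_div,
        ← ENNReal.ofReal_inv_of_pos (by positivity), inv_div] at h
      have e3 : (fun x => ‖(1 + ‖u x‖ ^ 2 + ‖v x‖ ^ 2) ^ (p / 2)‖ ^ ((2 - p) / 2)) =
          fun x => ((1 + ‖u x‖ ^ 2 + ‖v x‖ ^ 2) ^ (p / 2)) ^ ((2 - p) / 2) :=
        funext fun x => by rw [Real.norm_of_nonneg (Real.rpow_nonneg (by positivity) _)]
      rwa [e3] at h
    have holder := integral_mul_le_Lp_mul_Lq_of_nonneg hpq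
      (ae_of_all _ fun x => Real.rpow_nonneg (hW_nonneg x) _)
      (ae_of_all _ fun x => Real.rpow_nonneg (Real.rpow_nonneg (by positivity) _) _)
      hmem1 hmem2
    have e4 : ∀ x : Ω, ((‖u x - v x‖ ^ 2 *
        (1 + ‖u x‖ ^ 2 + ‖v x‖ ^ 2) ^ ((p - 2) / 2)) ^ (p / 2)) ^ (2 / p) =
        ‖u x - v x‖ ^ 2 * (1 + ‖u x‖ ^ 2 + ‖v x‖ ^ 2) ^ ((p - 2) / 2) := by
      intro x
      rw [← Real.rpow_mul (hW_nonneg x), show p / 2 * (2 / p) = 1 by field_simp,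
        Real.rpow_one]
    have e5 : ∀ x : Ω, (((1 + ‖u x‖ ^ 2 + ‖v x‖ ^ 2) ^ (p / 2)) ^ ((2 - p) / 2)) ^ (2 / (2 - p)) =
        (1 + ‖u x‖ ^ 2 + ‖v x‖ ^ 2) ^ (p / 2) := by
      intro x
      rw [← Real.rpow_mul (Real.rpow_nonneg (by positivity) _),
        show (2 - p) / 2 * (2 / (2 - p)) = 1 by field_simp, Real.rpow_one]
    have e6 : ∀ x : Ω, (‖u x - v x‖ ^ 2 *
        (1 + ‖u x‖ ^ 2 + ‖v x‖ ^ 2) ^ ((p - 2) / 2)) ^ (p / 2) *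
        ((1 + ‖u x‖ ^ 2 + ‖v x‖ ^ 2) ^ (p / 2)) ^ ((2 - p) / 2) = ‖u x - v x‖ ^ p := by
      intro x
      have hM1 : (0:ℝ) < 1 + ‖u x‖ ^ 2 + ‖v x‖ ^ 2 := by positivity
      have w1 : (‖u x - v x‖ ^ 2 * (1 + ‖u x‖ ^ 2 + ‖v x‖ ^ 2) ^ ((p - 2) / 2)) ^ (p / 2) =
          ‖u x - v x‖ ^ p * ((1 + ‖u x‖ ^ 2 + ‖v x‖ ^ 2) ^ ((p - 2) / 2)) ^ (p / 2) := by
        rw [Real.mul_rpow (pow_nonneg (norm_nonneg _) 2) (Real.rpow_nonneg hM1.le _)]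
        congr 1
        rw [← Real.rpow_natCast (‖u x - v x‖) 2, ← Real.rpow_mul (norm_nonneg _),
          show ((2:ℕ):ℝ) * (p / 2) = p by push_cast; ring]
      rw [w1, mul_assoc, ← Real.rpow_mul hM1.le, ← Real.rpow_mul hM1.le,
        ← Real.rpow_add hM1, show (p - 2) / 2 * (p / 2) + p / 2 * ((2 - p) / 2) = 0 by ring,
        Real.rpow_zero, mul_one]
    simp only [e4, e5, e6] at holder
    rw [show 1 / (2 / p) = p / 2 by rw [one_div_div], show 1 / (2 / (2 - p)) = 1 - p / 2 by
      rw [one_div_div]; ring] at holder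
    -- bound the first factor
    have hWD : (∫ x, ‖u x - v x‖ ^ 2 * (1 + ‖u x‖ ^ 2 + ‖v x‖ ^ 2) ^ ((p - 2) / 2) ∂μ) ≤
        2 / (p - 1) * ∫ x, (inner ℝ ((‖u x‖ ^ (p - 2)) • u x - (‖v x‖ ^ (p - 2)) • v x)
          (u x - v x) : ℝ) ∂μ := by
      calc (∫ x, ‖u x - v x‖ ^ 2 * (1 + ‖u x‖ ^ 2 + ‖v x‖ ^ 2) ^ ((p - 2) / 2) ∂μ)
          ≤ ∫ x, 2 / (p - 1) * (inner ℝ ((‖u x‖ ^ (p - 2)) • u x - (‖v x‖ ^ (p - 2)) • v x)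
              (u x - v x) : ℝ) ∂μ :=
            integral_mono hW_int (hD_int.const_mul _) hWle
        _ = _ := integral_const_mul _ _
    have hIW0 : 0 ≤ ∫ x, ‖u x - v x‖ ^ 2 * (1 + ‖u x‖ ^ 2 + ‖v x‖ ^ 2) ^ ((p - 2) / 2) ∂μ :=
      integral_nonneg hW_nonneg
    have h9 : (∫ x, ‖u x - v x‖ ^ 2 * (1 + ‖u x‖ ^ 2 + ‖v x‖ ^ 2) ^ ((p - 2) / 2) ∂μ) ^ (p / 2) ≤
        (2 / (p - 1) * ∫ x, (inner ℝ ((‖u x‖ ^ (p - 2)) • u x - (‖v x‖ ^ (p - 2)) • v x)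
          (u x - v x) : ℝ) ∂μ) ^ (p / 2) :=
      Real.rpow_le_rpow hIW0 hWD (by positivity)
    have h10 : (2 / (p - 1) * ∫ x, (inner ℝ ((‖u x‖ ^ (p - 2)) • u x - (‖v x‖ ^ (p - 2)) • v x)
        (u x - v x) : ℝ) ∂μ) ^ (p / 2) =
        (2 / (p - 1)) ^ (p / 2) * (∫ x, (inner ℝ ((‖u x‖ ^ (p - 2)) • u x -
          (‖v x‖ ^ (p - 2)) • v x) (u x - v x) : ℝ) ∂μ) ^ (p / 2) :=
      Real.mul_rpow hc hID0
    have hMpI0 : 0 ≤ (∫ x, (1 + ‖u x‖ ^ 2 + ‖v x‖ ^ 2) ^ (p / 2) ∂μ) ^ (1 - p / 2) :=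
      Real.rpow_nonneg (integral_nonneg fun x => Real.rpow_nonneg (by positivity) _) _
    calc ∫ x, ‖u x - v x‖ ^ p ∂μ
        ≤ (∫ x, ‖u x - v x‖ ^ 2 * (1 + ‖u x‖ ^ 2 + ‖v x‖ ^ 2) ^ ((p - 2) / 2) ∂μ) ^ (p / 2) *
          (∫ x, (1 + ‖u x‖ ^ 2 + ‖v x‖ ^ 2) ^ (p / 2) ∂μ) ^ (1 - p / 2) := holder
      _ ≤ (2 / (p - 1) * ∫ x, (inner ℝ ((‖u x‖ ^ (p - 2)) • u x - (‖v x‖ ^ (p - 2)) • v x)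
            (u x - v x) : ℝ) ∂μ) ^ (p / 2) *
          (∫ x, (1 + ‖u x‖ ^ 2 + ‖v x‖ ^ 2) ^ (p / 2) ∂μ) ^ (1 - p / 2) :=
          mul_le_mul_of_nonneg_right h9 hMpI0
      _ = _ := by rw [h10]
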